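/- Let G be a finite simple graph with an injective identifier function ID : V(G) → ℕ, and for a vertex u let OUT(u) = {w ∈ N(u) : (deg(u), ID(u)) < (deg(w), ID(w))} with pairs compared lexicographically. Let Good ⊆ V(G) be a set of vertices, for each v ∈ Good let IN*(v) be a set of neighbors u of v with (deg(u), ID(u)) < (deg(v), ID(v)), and let y : V(G) → ℝ be nonnegative. Assume that for every v ∈ Good, ∑_{u' ∈ IN*(v)} y_{u'} ≤ 1/3, and that for every vertex u, ∑_{w ∈ OUT(u)} y_w ≤ 1/4. Define 𝐮(y) = ∑_{v ∈ Good} (deg(v)/2) · ∑_{u ∈ IN*(v)} y_u and 𝐜(y) = ∑_{v ∈ Good} (deg(v)/2) · ( ∑_{u ∈ IN*(v)} ∑_{u' ∈ IN*(v)} y_u·y_{u'} + ∑_{u ∈ IN*(v)} ∑_{w ∈ OUT(u)} y_u·y_w ). Then 𝐮(y) − 𝐜(y) ≥ 𝐮(y)/3. -/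
import Mathlib


/-- With OUT(u) the out-neighbors of u in the (degree, ID)-lexicographic
orientation, a set Good of vertices, sets IN*(v) of in-neighbors of v for v ∈ Good, and
nonnegative y with ∑_{u'∈IN*(v)} y_{u'} ≤ 1/3 for all v ∈ Good and
∑_{w∈OUT(u)} y_w ≤ 1/4 for all u, the pessimistic estimator satisfies
𝐮(y) − 𝐜(y) ≥ 𝐮(y)/3. -/
theorem stmt_14 {V : Type*} [Fintype V] [DecidableEq V]
    (G : SimpleGraph V) [DecidableRel G.Adj]
    (ID : V → ℕ) (hID : Function.Injective ID)
    (Good : Finset V) (INstar : V → Finset V)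
    (hINstar : ∀ v ∈ Good, ∀ u ∈ INstar v, G.Adj u v ∧
      (G.degree u < G.degree v ∨ (G.degree u = G.degree v ∧ ID u < ID v)))
    (y : V → ℝ) (hy : ∀ v, 0 ≤ y v)
    (hIN : ∀ v ∈ Good, ∑ u' ∈ INstar v, y u' ≤ 1/3)
    (hOUT : ∀ u : V,
      ∑ w ∈ (G.neighborFinset u).filter (fun w =>
          G.degree u < G.degree w ∨ (G.degree u = G.degree w ∧ ID u < ID w)), y w ≤ 1/4) :
    (∑ v ∈ Good, (G.degree v : ℝ)/2 * ∑ u ∈ INstar v, y u) / 3 ≤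
      (∑ v ∈ Good, (G.degree v : ℝ)/2 * ∑ u ∈ INstar v, y u) -
        ∑ v ∈ Good, (G.degree v : ℝ)/2 *
          ((∑ u ∈ INstar v, ∑ u' ∈ INstar v, y u * y u') +
            ∑ u ∈ INstar v,
              ∑ w ∈ (G.neighborFinset u).filter (fun w =>
                G.degree u < G.degree w ∨ (G.degree u = G.degree w ∧ ID u < ID w)),
                y u * y w) := by
  have key : ∑ v ∈ Good, (G.degree v : ℝ)/2 *
          ((∑ u ∈ INstar v, ∑ u' ∈ INstar v, y u * y u') +
            ∑ u ∈ INstar v,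
              ∑ w ∈ (G.neighborFinset u).filter (fun w =>
                G.degree u < G.degree w ∨ (G.degree u = G.degree w ∧ ID u < ID w)),
                y u * y w) ≤
      (2/3) * ∑ v ∈ Good, (G.degree v : ℝ)/2 * ∑ u ∈ INstar v, y u := by
    rw [Finset.mul_sum]
    apply Finset.sum_le_sum
    intro v hv
    have hS0 : 0 ≤ ∑ u ∈ INstar v, y u := Finset.sum_nonneg fun u _ => hy u
    have hd0 : (0:ℝ) ≤ (G.degree v : ℝ)/2 := by positivity
    have h1 : ∑ u ∈ INstar v, ∑ u' ∈ INstar v, y u * y u'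
        ≤ (1/3) * ∑ u ∈ INstar v, y u := by
      rw [← Finset.sum_mul_sum]
      calc (∑ u ∈ INstar v, y u) * ∑ u' ∈ INstar v, y u'
          ≤ (1/3) * ∑ u' ∈ INstar v, y u' :=
            mul_le_mul_of_nonneg_right (hIN v hv) hS0
        _ = (1/3) * ∑ u ∈ INstar v, y u := rfl
    have h2 : ∑ u ∈ INstar v,
          ∑ w ∈ (G.neighborFinset u).filter (fun w =>
            G.degree u < G.degree w ∨ (G.degree u = G.degree w ∧ ID u < ID w)),
            y u * y w ≤ (1/4) * ∑ u ∈ INstar v, y u := by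
      rw [Finset.mul_sum]
      apply Finset.sum_le_sum
      intro u _
      rw [← Finset.mul_sum]
      calc y u * ∑ w ∈ (G.neighborFinset u).filter (fun w =>
              G.degree u < G.degree w ∨ (G.degree u = G.degree w ∧ ID u < ID w)), y w
          ≤ y u * (1/4) := mul_le_mul_of_nonneg_left (hOUT u) (hy u)
        _ = (1/4) * y u := mul_comm _ _
    have : (∑ u ∈ INstar v, ∑ u' ∈ INstar v, y u * y u') +
            ∑ u ∈ INstar v,
              ∑ w ∈ (G.neighborFinset u).filter (fun w =>
                G.degree u < G.degree w ∨ (G.degree u = G.degree w ∧ ID u < ID w)),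
                y u * y w ≤ (2/3) * ∑ u ∈ INstar v, y u := by nlinarith
    calc (G.degree v : ℝ)/2 * _ ≤ (G.degree v : ℝ)/2 * ((2/3) * ∑ u ∈ INstar v, y u) :=
          mul_le_mul_of_nonneg_left this hd0
      _ = (2/3) * ((G.degree v : ℝ)/2 * ∑ u ∈ INstar v, y u) := by ring
  linarith
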